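/- (Holevo–Helstrom, optimality.) For any two density matrices ρ and σ on ℂ^d and any measurement operator M (i.e., any d×d complex matrix with 0 ⪯ M ⪯ I in the Loewner order), the success probability of the distinguisher that receives ρ or σ each with probability 1/2 and guesses 'ρ' exactly on outcome M, namely (1/2)·Tr(Mρ) + (1/2)·Tr((I−M)σ), is at most (1/2)(1 + TD(ρ,σ)). -/

import Mathlib

open Matrix ComplexOrder

/-- The trace norm of a matrix: `‖X‖₁ = Tr √(Xᴴ X)`. -/
noncomputable def traceNorm {d : ℕ} (X : Matrix (Fin d) (Fin d) ℂ) : ℝ :=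
  (((Matrix.posSemidef_conjTranspose_mul_self X).1.eigenvectorUnitary.1 *
      diagonal (((↑) : ℝ → ℂ) ∘ Real.sqrt ∘ (Matrix.posSemidef_conjTranspose_mul_self X).1.eigenvalues) *
      (star (Matrix.posSemidef_conjTranspose_mul_self X).1.eigenvectorUnitary :
        Matrix (Fin d) (Fin d) ℂ)).trace).re

/-- The trace distance between two matrices: `TD(ρ,σ) = ‖ρ − σ‖₁ / 2`. -/
noncomputable def traceDist {d : ℕ} (ρ σ : Matrix (Fin d) (Fin d) ℂ) : ℝ :=
  traceNorm (ρ - σ) / 2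

/-- A density matrix: positive semidefinite with trace 1. -/
def IsDensityMatrix {d : ℕ} (ρ : Matrix (Fin d) (Fin d) ℂ) : Prop :=
  ρ.PosSemidef ∧ ρ.trace = 1

lemma myTrace_nonneg {n : Type*} [Fintype n] [DecidableEq n] {A : Matrix n n ℂ}
    (hA : A.PosSemidef) : 0 ≤ A.trace := by
  exact hA.trace_nonneg

lemma myTrace_mul_nonneg {n : Type*} [Fintype n] [DecidableEq n] {A B : Matrix n n ℂ}
    (hA : A.PosSemidef) (hB : B.PosSemidef) : 0 ≤ (A * B).trace := by
  obtain ⟨C, rfl⟩ : ∃ C : Matrix n n ℂ, B = Cᴴ * C := by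
    open scoped MatrixOrder in
    exact ⟨CFC.sqrt B, by
      rw [show (CFC.sqrt B)ᴴ = CFC.sqrt B from (CFC.sqrt_nonneg B).isSelfAdjoint,
        CFC.sqrt_mul_sqrt_self B hB.nonneg]⟩
  rw [← Matrix.mul_assoc, Matrix.trace_mul_cycle]
  exact myTrace_nonneg (hA.mul_mul_conjTranspose_same C)

lemma myTrace_mul_re_nonneg {n : Type*} [Fintype n] [DecidableEq n] {A B : Matrix n n ℂ}
    (hA : A.PosSemidef) (hB : B.PosSemidef) : 0 ≤ ((A * B).trace).re :=
  (Complex.nonneg_iff.mp (myTrace_mul_nonneg hA hB)).1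

theorem tr_M_delta_le {d : ℕ} {Δ M : Matrix (Fin d) (Fin d) ℂ}
    (hΔ : Δ.IsHermitian) (hΔ0 : Δ.trace = 0)
    (hM : M.PosSemidef) (hM' : ((1 : Matrix (Fin d) (Fin d) ℂ) - M).PosSemidef) :
    ((M * Δ).trace).re ≤ traceNorm Δ / 2 := by
  set U : Matrix (Fin d) (Fin d) ℂ := (hΔ.eigenvectorUnitary : Matrix (Fin d) (Fin d) ℂ) with hU
  set V : Matrix (Fin d) (Fin d) ℂ := star U with hV
  have hVU : V * U = 1 := Matrix.mem_unitaryGroup_iff'.mp hΔ.eigenvectorUnitary.2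
  set lam : Fin d → ℝ := hΔ.eigenvalues with hlam
  set P : Matrix (Fin d) (Fin d) ℂ := U * diagonal (fun i => ((max (lam i) 0 : ℝ) : ℂ)) * V with hP
  set N : Matrix (Fin d) (Fin d) ℂ := U * diagonal (fun i => ((max (-lam i) 0 : ℝ) : ℂ)) * V with hN
  set S : Matrix (Fin d) (Fin d) ℂ := U * diagonal (fun i => ((|lam i| : ℝ) : ℂ)) * V with hS
  have hPsd : P.PosSemidef := Matrix.PosSemidef.mul_mul_conjTranspose_same
    (Matrix.PosSemidef.diagonal fun i => Complex.zero_le_real.mpr (le_max_right _ _)) U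
  have hNsd : N.PosSemidef := Matrix.PosSemidef.mul_mul_conjTranspose_same
    (Matrix.PosSemidef.diagonal fun i => Complex.zero_le_real.mpr (le_max_right _ _)) U
  have hSsd : S.PosSemidef := Matrix.PosSemidef.mul_mul_conjTranspose_same
    (Matrix.PosSemidef.diagonal fun i => Complex.zero_le_real.mpr (abs_nonneg _)) U
  have hΔeq : Δ = U * diagonal (fun i => ((lam i : ℝ) : ℂ)) * V := hΔ.spectral_theorem
  have hPN : P - N = Δ := by
    have hf : (fun i => ((max (lam i) 0 : ℝ) : ℂ) - ((max (-lam i) 0 : ℝ) : ℂ))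
        = fun i => ((lam i : ℝ) : ℂ) := by
      funext i
      simp only [← Complex.ofReal_sub, max_zero_sub_eq_self]
    rw [hP, hN, hΔeq, ← Matrix.sub_mul, ← Matrix.mul_sub, Matrix.diagonal_sub, hf]
  have habs : ∀ a : ℝ, max a 0 + max (-a) 0 = |a| := by
    intro a
    rcases le_total a 0 with h | h
    · rw [max_eq_right h, max_eq_left (by linarith), abs_of_nonpos h, zero_add]
    · rw [max_eq_left h, max_eq_right (by linarith), abs_of_nonneg h, add_zero]
  have hSPN : P + N = S := by
    have hf : (fun i => ((max (lam i) 0 : ℝ) : ℂ) + ((max (-lam i) 0 : ℝ) : ℂ))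
        = fun i => ((|lam i| : ℝ) : ℂ) := by
      funext i
      simp only [← Complex.ofReal_add, habs]
    rw [hP, hN, hS, ← Matrix.add_mul, ← Matrix.mul_add, Matrix.diagonal_add, hf]
  have hconj : ∀ a b : Fin d → ℝ,
      (U * diagonal (fun i => ((a i : ℝ) : ℂ)) * V) * (U * diagonal (fun i => ((b i : ℝ) : ℂ)) * V)
      = U * diagonal (fun i => ((a i * b i : ℝ) : ℂ)) * V := by
    intro a b
    have h1 : (U * diagonal (fun i => ((a i : ℝ) : ℂ)) * V) * (U * diagonal (fun i => ((b i : ℝ) : ℂ)) * V)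
        = U * (diagonal (fun i => ((a i : ℝ) : ℂ)) * ((V * U) * (diagonal (fun i => ((b i : ℝ) : ℂ)) * V))) := by
      simp only [Matrix.mul_assoc]
    have hf : (fun i => ((a i : ℝ) : ℂ) * ((b i : ℝ) : ℂ)) = fun i => ((a i * b i : ℝ) : ℂ) := by
      funext i
      push_cast
      ring
    rw [h1, hVU, Matrix.one_mul, ← Matrix.mul_assoc (diagonal _) (diagonal _) V,
      Matrix.diagonal_mul_diagonal, hf, ← Matrix.mul_assoc]
  have hS2 : S ^ 2 = Δᴴ * Δ := by
    have hf : (fun i => ((|lam i| * |lam i| : ℝ) : ℂ)) = fun i => ((lam i * lam i : ℝ) : ℂ) := by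
      funext i
      rw [abs_mul_abs_self]
    rw [pow_two, hΔ.eq, hS, hΔeq, hconj, hconj, hf]
  have hsqrt : traceNorm Δ = (S.trace).re := by
    unfold traceNorm
    open scoped MatrixOrder in
    have e : cfc Real.sqrt (Δᴴ * Δ) = S := by
      rw [← hS2, ← cfcₙ_eq_cfc (hf0 := Real.sqrt_zero),
        ← CFC.sqrt_eq_real_sqrt _ (by rw [hS2]; exact (Matrix.posSemidef_conjTranspose_mul_self Δ).nonneg),
        CFC.sqrt_sq S hSsd.nonneg]
    rw [Matrix.IsHermitian.cfc_eq (Matrix.posSemidef_conjTranspose_mul_self Δ).1] at e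
    rw [← e]
    rfl
  -- traces
  have htrS : S.trace = P.trace + N.trace := by rw [← hSPN, Matrix.trace_add]
  have htrPN : P.trace - N.trace = 0 := by rw [← Matrix.trace_sub, hPN, hΔ0]
  have h1 : 0 ≤ ((M * N).trace).re := myTrace_mul_re_nonneg hM hNsd
  have h2 : 0 ≤ ((((1 : Matrix (Fin d) (Fin d) ℂ) - M) * P).trace).re :=
    myTrace_mul_re_nonneg hM' hPsd
  have h2' : ((M * P).trace).re ≤ (P.trace).re := by
    have : (((1 : Matrix (Fin d) (Fin d) ℂ) - M) * P).trace = P.trace - (M * P).trace := by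
      rw [Matrix.sub_mul, Matrix.one_mul, Matrix.trace_sub]
    rw [this] at h2
    simp only [Complex.sub_re] at h2
    linarith
  have hMΔ : ((M * Δ).trace).re = ((M * P).trace).re - ((M * N).trace).re := by
    rw [← hPN, Matrix.mul_sub, Matrix.trace_sub, Complex.sub_re]
  have htrPre : (P.trace).re = (N.trace).re := by
    have := congrArg Complex.re htrPN
    simp only [Complex.sub_re, Complex.zero_re] at this
    linarith
  have hfinal : traceNorm Δ = 2 * (P.trace).re := by
    rw [hsqrt, htrS, Complex.add_re, ← htrPre]; ring
  rw [hfinal]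
  linarith

/-- Holevo–Helstrom (optimality): for any measurement operator `0 ⪯ M ⪯ I`, the success
probability `(1/2)·Tr(Mρ) + (1/2)·Tr((I−M)σ)` of distinguishing `ρ` from `σ`
is at most `(1/2)(1 + TD(ρ,σ))`. -/
theorem holevo_helstrom_optimality {d : ℕ} {ρ σ M : Matrix (Fin d) (Fin d) ℂ}
    (hρ : IsDensityMatrix ρ) (hσ : IsDensityMatrix σ)
    (hM : M.PosSemidef) (hM' : ((1 : Matrix (Fin d) (Fin d) ℂ) - M).PosSemidef) :
    (1 / 2) * ((M * ρ).trace).re + (1 / 2) * ((((1 : Matrix (Fin d) (Fin d) ℂ) - M) * σ).trace).re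
      ≤ (1 / 2) * (1 + traceDist ρ σ) := by
  have hΔ : (ρ - σ).IsHermitian := hρ.1.1.sub hσ.1.1
  have hΔ0 : (ρ - σ).trace = 0 := by rw [Matrix.trace_sub, hρ.2, hσ.2, sub_self]
  have key := tr_M_delta_le hΔ hΔ0 hM hM'
  have h1 : ((M * (ρ - σ)).trace).re = ((M * ρ).trace).re - ((M * σ).trace).re := by
    rw [Matrix.mul_sub, Matrix.trace_sub, Complex.sub_re]
  have h2 : (((1 : Matrix (Fin d) (Fin d) ℂ) - M) * σ).trace.re = 1 - ((M * σ).trace).re := by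
    rw [Matrix.sub_mul, Matrix.one_mul, Matrix.trace_sub, Complex.sub_re, hσ.2, Complex.one_re]
  rw [h2]
  unfold traceDist
  rw [h1] at key
  linarith
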